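/- Let q be a real number with 0 < q < 1 and let x be a complex number with |x| < 1/(1−q). Then the Jackson q-integral of cos_q from 0 to x converges and equals sin_q(x); that is, (1−q)·∑_{k=0}^{∞} q^k x · cos_q(q^k x) = sin_q(x). -/

import Mathlib

open Filter Topology

/-- The `q`-basic number `[n]_q = (1 - q^n)/(1 - q)`. -/
noncomputable def qNum (q : ℝ) (n : ℕ) : ℝ := (1 - q ^ n) / (1 - q)

/-- The `q`-factorial `[n]_q! = [1]_q [2]_q ⋯ [n]_q`, with `[0]_q! = 1`. -/
noncomputable def qFact (q : ℝ) (n : ℕ) : ℝ := ∏ j ∈ Finset.range n, qNum q (j + 1)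

/-- The Gaussian binomial coefficient `[n]_q! / ([k]_q! [n-k]_q!)`. -/
noncomputable def qBinom (q : ℝ) (n k : ℕ) : ℝ := qFact q n / (qFact q k * qFact q (n - k))

/-- The `q`-exponential `e_q(z) = ∑ z^n / [n]_q!`. -/
noncomputable def qExp (q : ℝ) (z : ℂ) : ℂ := ∑' n : ℕ, z ^ n / (qFact q n : ℂ)

/-- The `q`-sine `sin_q(z) = ∑ (-1)^n z^(2n+1) / [2n+1]_q!`. -/
noncomputable def qSin (q : ℝ) (z : ℂ) : ℂ :=
  ∑' n : ℕ, (-1 : ℂ) ^ n * z ^ (2 * n + 1) / (qFact q (2 * n + 1) : ℂ)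

/-- The `q`-cosine `cos_q(z) = ∑ (-1)^n z^(2n) / [2n]_q!`. -/
noncomputable def qCos (q : ℝ) (z : ℂ) : ℂ :=
  ∑' n : ℕ, (-1 : ℂ) ^ n * z ^ (2 * n) / (qFact q (2 * n) : ℂ)

/-- The `q`-addition power `(x ⊕_q y)^n = ∑_{k=0}^n binom_q(n,k) x^k y^(n-k)`. -/
noncomputable def qAddPow (q : ℝ) (x y : ℂ) (n : ℕ) : ℂ :=
  ∑ k ∈ Finset.range (n + 1), (qBinom q n k : ℂ) * x ^ k * y ^ (n - k)

/-- The `q`-subtraction power `(x ⊖_q y)^n = ∑_{k=0}^n binom_q(n,k) (-1)^(n-k) x^k y^(n-k)`. -/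
noncomputable def qSubPow (q : ℝ) (x y : ℂ) (n : ℕ) : ℂ :=
  ∑ k ∈ Finset.range (n + 1), (qBinom q n k : ℂ) * (-1 : ℂ) ^ (n - k) * x ^ k * y ^ (n - k)

/-- The `q`-tangent `tan_q(z) = sin_q(z)/cos_q(z)`. -/
noncomputable def qTan (q : ℝ) (z : ℂ) : ℂ := qSin q z / qCos q z

/-- The second `q`-exponential `E_q(z) = ∑ q^(n(n-1)/2) z^n / [n]_q!`. -/
noncomputable def qExpE (q : ℝ) (z : ℂ) : ℂ :=
  ∑' n : ℕ, (q : ℂ) ^ (n * (n - 1) / 2) * z ^ n / (qFact q n : ℂ)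

section Aux

variable {q : ℝ}

lemma qNum_pos (hq0 : 0 < q) (hq1 : q < 1) (n : ℕ) : 0 < qNum q (n + 1) := by
  have h1 : q ^ (n + 1) < 1 := pow_lt_one₀ hq0.le hq1 (Nat.succ_ne_zero n)
  exact div_pos (by linarith) (by linarith)

lemma qFact_pos (hq0 : 0 < q) (hq1 : q < 1) (n : ℕ) : 0 < qFact q n := by
  induction n with
  | zero => simp [qFact]
  | succ n ih =>
    rw [qFact, Finset.prod_range_succ]
    exact mul_pos ih (qNum_pos hq0 hq1 n)

lemma qFact_succ' (n : ℕ) : qFact q (n + 1) = qFact q n * qNum q (n + 1) :=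
  Finset.prod_range_succ _ _

lemma summable_pow_div_qFact (hq0 : 0 < q) (hq1 : q < 1) {c : ℝ} (hc0 : 0 ≤ c)
    (hc : c < 1 / (1 - q)) : Summable (fun n => c ^ n / qFact q n) := by
  have hq' : 0 < 1 - q := by linarith
  rcases hc0.eq_or_lt with h0 | hpos
  · apply summable_of_ne_finset_zero (s := ({0} : Finset ℕ))
    intro n hn
    simp only [Finset.mem_singleton] at hn
    rw [← h0, zero_pow hn, zero_div]
  · apply summable_of_ratio_test_tendsto_lt_one (l := c * (1 - q))
    · rw [lt_div_iff₀ hq'] at hc; linarith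
    · exact Filter.Eventually.of_forall fun n =>
        ne_of_gt (div_pos (pow_pos hpos n) (qFact_pos hq0 hq1 n))
    · have key : ∀ n : ℕ, ‖c ^ (n + 1) / qFact q (n + 1)‖ / ‖c ^ n / qFact q n‖
          = c * (1 - q) / (1 - q ^ (n + 1)) := by
        intro n
        have h1 : q ^ (n + 1) < 1 := pow_lt_one₀ hq0.le hq1 (Nat.succ_ne_zero n)
        have hf := qFact_pos hq0 hq1 n
        have hf' := qFact_pos hq0 hq1 (n + 1)
        have hcp := pow_pos hpos n
        have hcp' := pow_pos hpos (n + 1)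
        have hnum := qNum_pos hq0 hq1 n
        rw [Real.norm_of_nonneg (by positivity), Real.norm_of_nonneg (by positivity)]
        have e1 : c ^ (n + 1) / qFact q (n + 1) / (c ^ n / qFact q n)
            = c / qNum q (n + 1) := by
          rw [qFact_succ', pow_succ]
          field_simp
        rw [e1, qNum, div_div_eq_mul_div]
      have t1 : Tendsto (fun n : ℕ => (1 : ℝ) - q ^ (n + 1)) atTop (𝓝 1) := by
        have h2 : Tendsto (fun n : ℕ => q ^ (n + 1)) atTop (𝓝 0) := by
          have := (tendsto_pow_atTop_nhds_zero_of_lt_one hq0.le hq1).comp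
            (tendsto_add_atTop_nat 1)
          simpa [Function.comp_def] using this
        simpa using tendsto_const_nhds.sub h2
      have t2 : Tendsto (fun n : ℕ => c * (1 - q) / (1 - q ^ (n + 1))) atTop
          (𝓝 (c * (1 - q))) := by
        have := (tendsto_const_nhds (x := c * (1 - q)) (f := atTop (α := ℕ))).div t1
          one_ne_zero
        simpa only [div_one, Pi.div_def] using this
      exact t2.congr fun n => (key n).symm

lemma hasSum_qCos (hq0 : 0 < q) (hq1 : q < 1) {z : ℂ} (hz : ‖z‖ < 1 / (1 - q)) :
    HasSum (fun n : ℕ => (-1 : ℂ) ^ n * z ^ (2 * n) / (qFact q (2 * n) : ℂ)) (qCos q z) := by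
  have hg := summable_pow_div_qFact hq0 hq1 (norm_nonneg z) hz
  have hinj : Function.Injective (fun n : ℕ => 2 * n) := fun a b h => by simpa using h
  have hsum : Summable (fun n : ℕ => (-1 : ℂ) ^ n * z ^ (2 * n) / (qFact q (2 * n) : ℂ)) := by
    apply Summable.of_norm
    apply (hg.comp_injective hinj).congr
    intro n
    have hf := qFact_pos hq0 hq1 (2 * n)
    simp [Function.comp, norm_div, norm_pow, Complex.norm_real, abs_of_pos hf,
      Real.norm_eq_abs, abs_of_pos hf]
  rw [qCos]
  exact hsum.hasSum

lemma hasSum_qSin (hq0 : 0 < q) (hq1 : q < 1) {z : ℂ} (hz : ‖z‖ < 1 / (1 - q)) :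
    HasSum (fun n : ℕ => (-1 : ℂ) ^ n * z ^ (2 * n + 1) / (qFact q (2 * n + 1) : ℂ))
      (qSin q z) := by
  have hg := summable_pow_div_qFact hq0 hq1 (norm_nonneg z) hz
  have hinj : Function.Injective (fun n : ℕ => 2 * n + 1) := fun a b h => by simpa using h
  have hsum : Summable
      (fun n : ℕ => (-1 : ℂ) ^ n * z ^ (2 * n + 1) / (qFact q (2 * n + 1) : ℂ)) := by
    apply Summable.of_norm
    apply (hg.comp_injective hinj).congr
    intro n
    have hf := qFact_pos hq0 hq1 (2 * n + 1)
    simp [Function.comp, norm_div, norm_pow, Complex.norm_real, abs_of_pos hf,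
      Real.norm_eq_abs]
  rw [qSin]
  exact hsum.hasSum

end Aux


/-- The Jackson q-integral of `cos_q` from 0 to `x` converges and equals `sin_q(x)`. -/
theorem jackson_integral_qCos (q : ℝ) (hq0 : 0 < q) (hq1 : q < 1) (x : ℂ)
    (hx : ‖x‖ < 1 / (1 - q)) :
    HasSum (fun k : ℕ => (1 - (q : ℂ)) * ((q : ℂ) ^ k * x) * qCos q ((q : ℂ) ^ k * x))
      (qSin q x) := by
  have hq' : 0 < 1 - q := by linarith
  by_cases hx0 : x = 0
  · subst hx0
    have hs : qSin q 0 = 0 := by simp [qSin, pow_succ]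
    rw [hs]
    simpa using hasSum_zero
  set c := ‖x‖ with hc_def
  have hc : 0 < c := norm_pos_iff.mpr hx0
  -- the double-indexed family
  set F : ℕ × ℕ → ℂ := fun p =>
    (1 - (q : ℂ)) * (-1 : ℂ) ^ p.2 * ((q : ℂ) ^ p.1 * x) ^ (2 * p.2 + 1)
      / (qFact q (2 * p.2) : ℂ) with hF_def
  -- norm bound for qFact casts etc.
  have habs : ∀ k : ℕ, ‖((q : ℂ) ^ k * x)‖ = q ^ k * c := by
    intro k
    rw [norm_mul, norm_pow, Complex.norm_real, Real.norm_eq_abs, abs_of_pos hq0]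
  have hzk : ∀ k : ℕ, ‖((q : ℂ) ^ k * x)‖ < 1 / (1 - q) := by
    intro k
    rw [habs]
    calc q ^ k * c ≤ 1 * c := by
          exact mul_le_mul_of_nonneg_right (pow_le_one₀ hq0.le hq1.le) hc.le
      _ = c := one_mul c
      _ < 1 / (1 - q) := hx
  -- summability of F
  have hb : Summable (fun n : ℕ => c ^ (2 * n + 1) / qFact q (2 * n)) := by
    have hg := summable_pow_div_qFact hq0 hq1 hc.le hx
    have hinj : Function.Injective (fun n : ℕ => 2 * n) := fun a b h => by simpa using h
    apply (((hg.comp_injective hinj)).mul_left c).congr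
    intro n
    simp [Function.comp, pow_succ, pow_mul]
    ring
  have hFsum : Summable F := by
    apply Summable.of_norm
    apply Summable.of_nonneg_of_le (fun p => norm_nonneg _)
      (g := fun p : ℕ × ℕ => ‖F p‖)
      (f := fun p : ℕ × ℕ => ((1 - q) * q ^ p.1) * (c ^ (2 * p.2 + 1) / qFact q (2 * p.2)))
    · intro p
      obtain ⟨k, n⟩ := p
      have hf := qFact_pos hq0 hq1 (2 * n)
      have hnorm : ‖F (k, n)‖ = (1 - q) * ((q ^ k * c) ^ (2 * n + 1) / qFact q (2 * n)) := by
        have h1q : (1 - (q : ℂ)) = ((1 - q : ℝ) : ℂ) := by push_cast; ring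
        simp only [hF_def, norm_div, norm_mul, norm_pow, Complex.norm_real, h1q,
          Real.norm_eq_abs, norm_one, norm_neg, one_pow]
        rw [abs_of_pos hq', abs_of_pos hq0, abs_of_pos hf]
        ring
      rw [hnorm, mul_pow, ← pow_mul]
      have hle : q ^ (k * (2 * n + 1)) ≤ q ^ k :=
        pow_le_pow_of_le_one hq0.le hq1.le (by nlinarith)
      calc (1 - q) * (q ^ (k * (2 * n + 1)) * c ^ (2 * n + 1) / qFact q (2 * n))
          = q ^ (k * (2 * n + 1)) * ((1 - q) * c ^ (2 * n + 1) / qFact q (2 * n)) := by ring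
        _ ≤ q ^ k * ((1 - q) * c ^ (2 * n + 1) / qFact q (2 * n)) := by
            apply mul_le_mul_of_nonneg_right hle
            positivity
        _ = (1 - q) * q ^ k * (c ^ (2 * n + 1) / qFact q (2 * n)) := by ring
    · exact Summable.mul_of_nonneg (f := fun k : ℕ => (1 - q) * q ^ k)
        (g := fun n : ℕ => c ^ (2 * n + 1) / qFact q (2 * n))
        ((summable_geometric_of_lt_one hq0.le hq1).mul_left (1 - q)) hb
        (fun k => by positivity)
        (fun n => by have := qFact_pos hq0 hq1 (2 * n); positivity)
  -- fiberwise sum over k (geometric series)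
  have hfib_n : ∀ n : ℕ, HasSum (fun k : ℕ => F (k, n))
      ((-1 : ℂ) ^ n * x ^ (2 * n + 1) / (qFact q (2 * n + 1) : ℂ)) := by
    intro n
    have hr : ‖(q : ℂ) ^ (2 * n + 1)‖ < 1 := by
      rw [norm_pow, Complex.norm_real, Real.norm_eq_abs, abs_of_pos hq0]
      exact pow_lt_one₀ hq0.le hq1 (by omega)
    have hgeo := (hasSum_geometric_of_norm_lt_one hr).mul_left
      ((1 - (q : ℂ)) * (-1 : ℂ) ^ n * x ^ (2 * n + 1) / (qFact q (2 * n) : ℂ))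
    have heq : ∀ k : ℕ,
        (1 - (q : ℂ)) * (-1 : ℂ) ^ n * x ^ (2 * n + 1) / (qFact q (2 * n) : ℂ)
          * ((q : ℂ) ^ (2 * n + 1)) ^ k = F (k, n) := by
      intro k
      simp only [hF_def]
      rw [mul_pow, ← pow_mul, ← pow_mul, Nat.mul_comm k (2 * n + 1)]
      ring
    simp only [heq] at hgeo
    have hfe : (qFact q (2 * n + 1) : ℝ) = qFact q (2 * n) * ((1 - q ^ (2 * n + 1)) / (1 - q)) := by
      rw [qFact_succ', qNum]
    have h1 : (0 : ℝ) < 1 - q ^ (2 * n + 1) := by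
      have := pow_lt_one₀ hq0.le hq1 (n := 2 * n + 1) (by omega)
      linarith
    have hne1 : (1 : ℂ) - (q : ℂ) ^ (2 * n + 1) ≠ 0 := by
      rw [show (1 : ℂ) - (q : ℂ) ^ (2 * n + 1) = ((1 - q ^ (2 * n + 1) : ℝ) : ℂ) by push_cast; ring]
      exact_mod_cast h1.ne'
    have hne2 : (1 : ℂ) - (q : ℂ) ≠ 0 := by
      rw [show (1 : ℂ) - (q : ℂ) = ((1 - q : ℝ) : ℂ) by push_cast; ring]
      exact_mod_cast hq'.ne'
    have hne3 : (qFact q (2 * n) : ℂ) ≠ 0 := by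
      exact_mod_cast (qFact_pos hq0 hq1 (2 * n)).ne'
    have hval : (1 - (q : ℂ)) * (-1 : ℂ) ^ n * x ^ (2 * n + 1) / (qFact q (2 * n) : ℂ)
        * (1 - (q : ℂ) ^ (2 * n + 1))⁻¹
        = (-1 : ℂ) ^ n * x ^ (2 * n + 1) / (qFact q (2 * n + 1) : ℂ) := by
      rw [hfe]
      push_cast
      field_simp
    rwa [hval] at hgeo
  -- fiberwise sum over n for fixed k
  have hfib_k : ∀ k : ℕ, HasSum (fun n : ℕ => F (k, n))
      ((1 - (q : ℂ)) * ((q : ℂ) ^ k * x) * qCos q ((q : ℂ) ^ k * x)) := by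
    intro k
    have hcos := (hasSum_qCos hq0 hq1 (hzk k)).mul_left ((1 - (q : ℂ)) * ((q : ℂ) ^ k * x))
    have heq2 : ∀ n : ℕ,
        (1 - (q : ℂ)) * ((q : ℂ) ^ k * x)
          * ((-1 : ℂ) ^ n * ((q : ℂ) ^ k * x) ^ (2 * n) / (qFact q (2 * n) : ℂ))
        = F (k, n) := by
      intro n
      simp only [hF_def]
      ring
    simpa only [heq2] using hcos
  -- assemble
  have hFsum' : Summable (F ∘ ⇑(Equiv.prodComm ℕ ℕ)) :=
    (Equiv.prodComm ℕ ℕ).summable_iff.mpr hFsum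
  have hT := hFsum'.hasSum
  have hterm := hT.prod_fiberwise (fun n => hfib_n n)
  have hsin := hasSum_qSin hq0 hq1 hx
  have hTeq : (∑' p, (F ∘ ⇑(Equiv.prodComm ℕ ℕ)) p) = qSin q x := hterm.unique hsin
  rw [hTeq] at hT
  have hF_has : HasSum F (qSin q x) := (Equiv.prodComm ℕ ℕ).hasSum_iff.mp hT
  exact hF_has.prod_fiberwise (fun k => hfib_k k)
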